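/- The space [P_n(ℝ²)]² of vector-valued polynomials of degree at most n in two variables decomposes as a direct sum [P_n]² = rot(P_{n+1}) ⊕ x·P_{n-1}, where rot(φ) = (∂₂φ, -∂₁φ) is the vector rotation (rotated gradient) of a scalar polynomial. -/

import Mathlib

open MvPolynomial

noncomputable section

abbrev Poly2 := MvPolynomial (Fin 2) ℝ

/-- `p ∈ P_m(ℝ²)` (total degree at most `m`, with `P_m = {0}` for `m < 0`). -/
def degLE (m : ℤ) (p : Poly2) : Prop := p = 0 ∨ (p.totalDegree : ℤ) ≤ m

/-- Rotated gradient `rot(φ) = (∂₂φ, -∂₁φ)` of a scalar polynomial. -/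
def prot2 (q : Poly2) : Fin 2 → Poly2 := ![pderiv 1 q, -(pderiv 0 q)]

/-- The vector field `x · q = (x₁ q, x₂ q)` for a scalar polynomial `q`. -/
def xmul2 (q : Poly2) : Fin 2 → Poly2 := fun i => X i * q


def wt (s : Fin 2 →₀ ℕ) : ℕ := s 0 + s 1

lemma wt_eq (s : Fin 2 →₀ ℕ) : (s.sum fun _ e => e) = wt s := by
  rw [Finsupp.sum_fintype _ _ (fun _ => rfl), Fin.sum_univ_two, wt]

lemma wt_ne_zero {s : Fin 2 →₀ ℕ} (h : s ≠ 0) : wt s ≠ 0 := by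
  intro h0
  apply h
  ext i
  fin_cases i <;> simp [wt] at h0 ⊢ <;> omega

def Emap (p : Poly2) : Poly2 := X 0 * pderiv 0 p + X 1 * pderiv 1 p

lemma Emap_monomial (s : Fin 2 →₀ ℕ) (c : ℝ) :
    Emap (monomial s c) = monomial s (c * (wt s : ℝ)) := by
  have key : ∀ i : Fin 2, X i * pderiv i (monomial s c) = monomial s (c * (s i : ℝ)) := by
    intro i
    rw [pderiv_monomial, X, monomial_mul, one_mul]
    by_cases h : s i = 0
    · simp [h]
    · rw [add_tsub_cancel_of_le (Finsupp.single_le_iff.mpr (Nat.one_le_iff_ne_zero.mpr h))]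
  rw [Emap, key 0, key 1, ← map_add]
  congr 1
  push_cast [wt]
  ring

lemma Emap_sum {A : Type*} (t : Finset A) (f : A → Poly2) :
    Emap (∑ a ∈ t, f a) = ∑ a ∈ t, Emap (f a) := by
  simp only [Emap, map_sum, Finset.mul_sum, Finset.sum_add_distrib]

lemma coeff_Emap (p : Poly2) (a : Fin 2 →₀ ℕ) :
    coeff a (Emap p) = (wt a : ℝ) * coeff a p := by
  conv_lhs => rw [p.as_sum, Emap_sum]
  rw [coeff_sum]
  simp only [Emap_monomial, coeff_monomial]
  rw [Finset.sum_ite_eq' p.support a (fun s => coeff s p * (wt s : ℝ))]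
  by_cases h : a ∈ p.support
  · rw [if_pos h]; ring
  · rw [if_neg h, notMem_support_iff.mp h, mul_zero]

/-- The "anti-Euler" polynomial: divide each monomial coefficient by its weight. -/
def Phi (r : Poly2) : Poly2 :=
  ∑ a ∈ r.support, monomial a (-coeff a r / (wt a : ℝ))

lemma coeff_Phi (r : Poly2) (b : Fin 2 →₀ ℕ) :
    coeff b (Phi r) = -coeff b r / (wt b : ℝ) := by
  rw [Phi, coeff_sum]
  simp only [coeff_monomial]
  rw [Finset.sum_ite_eq' r.support b (fun a => -coeff a r / (wt a : ℝ))]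
  by_cases h : b ∈ r.support
  · rw [if_pos h]
  · rw [if_neg h, notMem_support_iff.mp h, neg_zero, zero_div]

lemma Emap_Phi {r : Poly2} (h0 : coeff 0 r = 0) : Emap (Phi r) = -r := by
  ext a
  rw [coeff_Emap, coeff_Phi, coeff_neg]
  by_cases ha : a = 0
  · subst ha; simp [wt, h0]
  · have : (wt a : ℝ) ≠ 0 := Nat.cast_ne_zero.mpr (wt_ne_zero ha)
    field_simp

lemma totalDegree_monomial_le (s : Fin 2 →₀ ℕ) (c : ℝ) :
    (monomial s c).totalDegree ≤ wt s := by
  by_cases h : c = 0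
  · simp [h]
  · rw [totalDegree_monomial s h, wt_eq]

lemma totalDegree_le_iff {p : Poly2} {d : ℕ} :
    p.totalDegree ≤ d ↔ ∀ s, coeff s p ≠ 0 → wt s ≤ d := by
  constructor
  · intro h s hs
    exact (wt_eq s ▸ le_totalDegree (mem_support_iff.mpr hs)).trans h
  · intro h
    exact Finset.sup_le fun s hs => (wt_eq s).symm ▸ h s (mem_support_iff.mp hs)

lemma totalDegree_Phi_le {r : Poly2} {d : ℕ} (h : r.totalDegree ≤ d) :
    (Phi r).totalDegree ≤ d := by
  apply totalDegree_finsetSum_le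
  intro a ha
  exact (totalDegree_monomial_le _ _).trans (totalDegree_le_iff.mp h a (mem_support_iff.mp ha))

lemma totalDegree_pderiv_le {p : Poly2} {d : ℕ} (h : p.totalDegree ≤ d + 1) (i : Fin 2) :
    (pderiv i p).totalDegree ≤ d := by
  conv_lhs => rw [p.as_sum, map_sum]
  apply totalDegree_finsetSum_le
  intro s hs
  rw [pderiv_monomial]
  by_cases h0 : s i = 0
  · simp [h0]
  · refine (totalDegree_monomial_le _ _).trans ?_
    have hws : wt s ≤ d + 1 := (wt_eq s ▸ le_totalDegree hs).trans h
    have hi : i = 0 ∨ i = 1 := by fin_cases i <;> simp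
    rcases hi with hi | hi <;> subst hi <;>
      simp only [wt, Finsupp.tsub_apply, Finsupp.single_apply] at h0 hws ⊢ <;>
      split_ifs <;> omega

lemma degLE_nat {n : ℕ} {p : Poly2} (h : degLE (n : ℤ) p) : p.totalDegree ≤ n := by
  rcases h with h | h
  · simp [h]
  · exact_mod_cast h

lemma Emap_sub (p q : Poly2) : Emap (p - q) = Emap p - Emap q := by
  simp only [Emap, map_sub]; ring

/-- Uniqueness: the decomposition into `rot` and `x·` parts is unique. -/
lemma unique_aux {φ φ' q q' : Poly2}
    (h : prot2 φ + xmul2 q = prot2 φ' + xmul2 q') :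
    prot2 φ = prot2 φ' ∧ xmul2 q = xmul2 q' := by
  have eq0 : pderiv 1 φ + X 0 * q = pderiv 1 φ' + X 0 * q' := by
    have := congrFun h 0
    simpa [prot2, xmul2] using this
  have eq1 : -(pderiv 0 φ) + X 1 * q = -(pderiv 0 φ') + X 1 * q' := by
    have := congrFun h 1
    simpa [prot2, xmul2] using this
  have hE : Emap φ = Emap φ' := by
    simp only [Emap]
    linear_combination X 1 * eq0 - X 0 * eq1
  have hψ : ∀ a : Fin 2 →₀ ℕ, a ≠ 0 → coeff a (φ - φ') = 0 := by
    intro a ha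
    have h1 : coeff a (Emap (φ - φ')) = 0 := by
      rw [Emap_sub, hE, sub_self, coeff_zero]
    rw [coeff_Emap] at h1
    have : (wt a : ℝ) ≠ 0 := Nat.cast_ne_zero.mpr (wt_ne_zero ha)
    exact (mul_eq_zero.mp h1).resolve_left this
  have hC : φ - φ' = C (coeff 0 (φ - φ')) := by
    ext a
    rw [coeff_C]
    by_cases ha : a = 0
    · subst ha; simp
    · rw [if_neg (Ne.symm ha), hψ a ha]
  have pd : ∀ i : Fin 2, pderiv i φ = pderiv i φ' := by
    intro i
    have : pderiv i (φ - φ') = 0 := by rw [hC, pderiv_C]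
    rw [map_sub, sub_eq_zero] at this
    exact this
  have hq : q = q' := by
    rw [pd 1] at eq0
    exact mul_left_cancel₀ (X_ne_zero 0) (add_left_cancel eq0)
  constructor
  · unfold prot2; rw [pd 0, pd 1]
  · rw [hq]

/-- `[P_n(ℝ²)]² = rot(P_{n+1}) ⊕ x · P_{n-1}`: every vector polynomial of degree at
most `n` decomposes uniquely as a sum of a rotated gradient of a polynomial of degree
at most `n+1` and `x` times a scalar polynomial of degree at most `n-1`. -/
theorem poly_decomposition_2d_rot_x (n : ℕ) (v : Fin 2 → Poly2)
    (hv : ∀ i, degLE (n : ℤ) (v i)) :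
    ∃! gc : (Fin 2 → Poly2) × (Fin 2 → Poly2),
      (∃ q : Poly2, degLE ((n : ℤ) + 1) q ∧ gc.1 = prot2 q) ∧
      (∃ q : Poly2, degLE ((n : ℤ) - 1) q ∧ gc.2 = xmul2 q) ∧
      v = gc.1 + gc.2 := by
  classical
  set r : Poly2 := X 0 * v 1 - X 1 * v 0 with hr_def
  have hr0 : coeff 0 r = 0 := by
    rw [hr_def, coeff_sub, coeff_X_mul', coeff_X_mul']
    simp
  set φ : Poly2 := Phi r with hφ_def
  have hEφ : Emap φ = -r := Emap_Phi hr0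
  set w0 : Poly2 := v 0 - pderiv 1 φ with hw0_def
  set w1 : Poly2 := v 1 + pderiv 0 φ with hw1_def
  have key : X 0 * w1 = X 1 * w0 := by
    have := hEφ
    simp only [Emap, hr_def] at this
    rw [hw0_def, hw1_def]
    linear_combination this
  -- the quotient polynomial
  set q : Poly2 := MvPolynomial.divMonomial w0 (Finsupp.single 0 1) with hq_def
  have hmod : MvPolynomial.modMonomial w0 (Finsupp.single 0 1) = 0 := by
    ext m
    rw [coeff_zero]
    by_cases hle : Finsupp.single (0 : Fin 2) 1 ≤ m
    · exact coeff_modMonomial_of_le w0 hle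
    · rw [coeff_modMonomial_of_not_le w0 hle]
      have hm0 : m 0 = 0 := by
        by_contra h
        exact hle (Finsupp.single_le_iff.mpr (Nat.one_le_iff_ne_zero.mpr h))
      have h1 : coeff m w0 = coeff (Finsupp.single 1 1 + m) (X 1 * w0) :=
        (coeff_X_mul m 1 w0).symm
      rw [h1, ← key, coeff_X_mul']
      rw [if_neg]
      simp [Finsupp.mem_support_iff, hm0]
  have hw0q : w0 = X 0 * q := by
    have := MvPolynomial.divMonomial_add_modMonomial_single w0 0
    rw [hmod, add_zero] at this
    exact this.symm
  have hw1q : w1 = X 1 * q := by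
    have h2 : X 0 * w1 = X 0 * (X 1 * q) := by
      rw [key, hw0q]; ring
    exact mul_left_cancel₀ (X_ne_zero 0) h2
  -- degree bounds
  have hrdeg : r.totalDegree ≤ n + 1 := by
    rw [totalDegree_le_iff]
    intro s hs
    rw [hr_def, coeff_sub] at hs
    have : coeff s (X 0 * v 1) ≠ 0 ∨ coeff s (X 1 * v 0) ≠ 0 := by
      by_contra h
      push_neg at h
      rw [h.1, h.2, sub_self] at hs
      exact hs rfl
    have hb : ∀ i j : Fin 2, coeff s (X i * v j) ≠ 0 → wt s ≤ n + 1 := by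
      intro i j h
      have h1 : wt s ≤ (X i * v j).totalDegree :=
        totalDegree_le_iff.mp le_rfl s h
      have h2 : (X i * v j).totalDegree ≤ 1 + n :=
        (totalDegree_mul _ _).trans
          (add_le_add (by simp [totalDegree_X]) (degLE_nat (hv j)))
      omega
    rcases this with h | h
    · exact hb 0 1 h
    · exact hb 1 0 h
  have hφdeg : φ.totalDegree ≤ n + 1 := totalDegree_Phi_le hrdeg
  have hpd : ∀ i : Fin 2, (pderiv i φ).totalDegree ≤ n :=
    totalDegree_pderiv_le hφdeg
  have hw0deg : w0.totalDegree ≤ n := by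
    rw [totalDegree_le_iff]
    intro s hs
    rw [hw0_def, coeff_sub] at hs
    have : coeff s (v 0) ≠ 0 ∨ coeff s (pderiv 1 φ) ≠ 0 := by
      by_contra h
      push_neg at h
      rw [h.1, h.2, sub_self] at hs
      exact hs rfl
    rcases this with h | h
    · exact totalDegree_le_iff.mp (degLE_nat (hv 0)) s h
    · exact totalDegree_le_iff.mp (hpd 1) s h
  have hqdeg : degLE ((n : ℤ) - 1) q := by
    by_cases hq0 : q = 0
    · exact Or.inl hq0
    · right
      obtain ⟨s, hs⟩ := ne_zero_iff.mp hq0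
      have hkey : ∀ t : Fin 2 →₀ ℕ, coeff t q ≠ 0 → wt t + 1 ≤ n := by
        intro t ht
        have : coeff (Finsupp.single 0 1 + t) w0 ≠ 0 := by
          rw [hw0q, coeff_X_mul]
          exact ht
        have h2 := totalDegree_le_iff.mp hw0deg _ this
        have h3 : wt (Finsupp.single 0 1 + t) = 1 + wt t := by
          simp [wt, Finsupp.add_apply, Finsupp.single_apply]
          ring
        omega
      have hn1 : 1 ≤ n := by
        have := hkey s hs
        omega
      have : q.totalDegree ≤ n - 1 := by
        rw [totalDegree_le_iff]
        intro t ht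
        have := hkey t ht
        omega
      have h4 : (q.totalDegree : ℤ) ≤ ((n - 1 : ℕ) : ℤ) := by exact_mod_cast this
      rw [Nat.cast_sub hn1] at h4
      simpa using h4
  have hφLE : degLE ((n : ℤ) + 1) φ := by
    right
    exact_mod_cast (Nat.cast_le.mpr hφdeg : ((φ.totalDegree : ℕ) : ℤ) ≤ ((n + 1 : ℕ) : ℤ))
  refine ⟨(prot2 φ, xmul2 q), ⟨⟨φ, hφLE, rfl⟩, ⟨q, hqdeg, rfl⟩, ?_⟩, ?_⟩
  · funext i
    have hi : i = 0 ∨ i = 1 := by fin_cases i <;> simp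
    rcases hi with hi | hi <;> subst hi
    · show v 0 = prot2 φ 0 + xmul2 q 0
      simp only [prot2, xmul2, Matrix.cons_val_zero]
      rw [← hw0q, hw0_def]
      ring
    · show v 1 = prot2 φ 1 + xmul2 q 1
      simp only [prot2, xmul2, Matrix.cons_val_one, Matrix.head_cons, Matrix.cons_val_zero]
      rw [← hw1q, hw1_def]
      ring
  · rintro ⟨g, c⟩ ⟨⟨ψ, _, rfl⟩, ⟨p, _, rfl⟩, hvgc⟩
    have heq : prot2 ψ + xmul2 p = prot2 φ + xmul2 q := by
      rw [← hvgc]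
      funext i
      have hi : i = 0 ∨ i = 1 := by fin_cases i <;> simp
      rcases hi with hi | hi <;> subst hi
      · show v 0 = prot2 φ 0 + xmul2 q 0
        simp only [prot2, xmul2, Matrix.cons_val_zero]
        rw [← hw0q, hw0_def]; ring
      · show v 1 = prot2 φ 1 + xmul2 q 1
        simp only [prot2, xmul2, Matrix.cons_val_one, Matrix.head_cons, Matrix.cons_val_zero]
        rw [← hw1q, hw1_def]; ring
    obtain ⟨h1, h2⟩ := unique_aux heq
    exact Prod.ext h1 h2
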